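/- (Polynomial Bohnenblust–Hille inequality via polarization) Let m be a positive integer and suppose C ≥ 1 is a constant such that for every positive integer n and every m-linear form L : ℓ_∞^n × ⋯ × ℓ_∞^n → ℂ one has (Σ_{i_1,...,i_m=1}^n |L(e_{i_1},...,e_{i_m})|^{2m/(m+1)})^{(m+1)/(2m)} ≤ C‖L‖. Then for every positive integer n and every m-homogeneous polynomial P(z) = Σ_{|α|=m} a_α z^α on ℂ^n, one has (Σ_{|α|=m} |a_α|^{2m/(m+1)})^{(m+1)/(2m)} ≤ C · m^m / (m!)^{(m+1)/(2m)} · ‖P‖. -/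

import Mathlib

open scoped BigOperators

open Finset


namespace BHPolar

variable {m n : ℕ}

/-- number of slots mapping to `j` -/
def cnt (i : Fin m → Fin n) : Fin n → ℕ :=
  fun j => (univ.filter fun k => i k = j).card

lemma sum_cnt (i : Fin m → Fin n) : ∑ j, cnt i j = m := by
  classical
  have := Finset.card_eq_sum_card_fiberwise (f := i) (s := univ) (t := univ)
    (fun x _ => mem_univ _)
  simpa [cnt] using this.symm

lemma cnt_mem (i : Fin m → Fin n) : cnt i ∈ Finset.Nat.antidiagonalTuple n m := by
  rw [Finset.Nat.mem_antidiagonalTuple]; exact sum_cnt i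

lemma cnt_comp (i : Fin m → Fin n) (σ : Equiv.Perm (Fin m)) :
    cnt (i ∘ σ) = cnt i := by
  classical
  funext j
  refine Finset.card_bij (fun k _ => σ k) ?_ ?_ ?_
  · intro k hk
    simp only [mem_filter, mem_univ, true_and] at hk ⊢
    exact hk
  · intro k₁ _ k₂ _ hk
    exact σ.injective hk
  · intro k hk
    simp only [mem_filter, mem_univ, true_and] at hk
    exact ⟨σ.symm k, by simp [Function.comp, hk], by simp⟩

private def sigmaFstFiber {N : ℕ} (β : Fin N → Type*) (j : Fin N) :
    {p : Σ i, β i // p.1 = j} ≃ β j where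
  toFun p := p.2 ▸ p.1.2
  invFun b := ⟨⟨j, b⟩, rfl⟩
  left_inv := by rintro ⟨⟨i, b⟩, h⟩; subst h; rfl
  right_inv b := rfl

lemma exists_cnt_eq {α : Fin n → ℕ} (hα : ∑ j, α j = m) :
    ∃ i : Fin m → Fin n, cnt i = α := by
  classical
  have hcard : Fintype.card (Σ j : Fin n, Fin (α j)) = Fintype.card (Fin m) := by
    simp [hα]
  let e : (Σ j : Fin n, Fin (α j)) ≃ Fin m := Fintype.equivOfCardEq hcard
  refine ⟨fun k => (e.symm k).1, ?_⟩
  funext j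
  have h1 : cnt (fun k => (e.symm k).1) j
      = Fintype.card {k : Fin m // (e.symm k).1 = j} := by
    rw [Fintype.card_subtype]; rfl
  have h2 : Fintype.card {k : Fin m // (e.symm k).1 = j}
      = Fintype.card {p : Σ j', Fin (α j') // p.1 = j} :=
    Fintype.card_congr
      ((Equiv.subtypeEquiv e (fun p => by simp)).symm)
  rw [h1, h2, Fintype.card_congr (sigmaFstFiber _ j), Fintype.card_fin]

lemma exists_perm_comp {i i₀ : Fin m → Fin n} (h : cnt i = cnt i₀) :
    ∃ σ : Equiv.Perm (Fin m), i₀ ∘ σ = i := by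
  classical
  have hj : ∀ j, Fintype.card {k // i k = j} = Fintype.card {k // i₀ k = j} := by
    intro j
    rw [Fintype.card_subtype, Fintype.card_subtype]
    exact congrFun h j
  let e : ∀ j, {k // i k = j} ≃ {k // i₀ k = j} := fun j => Fintype.equivOfCardEq (hj j)
  refine ⟨(Equiv.sigmaFiberEquiv i).symm.trans
    ((Equiv.sigmaCongrRight e).trans (Equiv.sigmaFiberEquiv i₀)), ?_⟩
  funext k
  exact (e (i k) ⟨k, rfl⟩).2

/-- the fiber of `cnt` over `α` -/
def Fb (m n : ℕ) (α : Fin n → ℕ) : Finset (Fin m → Fin n) :=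
  univ.filter fun i => cnt i = α

lemma one_le_card_Fb {α : Fin n → ℕ} (hα : ∑ j, α j = m) : 1 ≤ (Fb m n α).card := by
  classical
  obtain ⟨i, hi⟩ := exists_cnt_eq hα
  exact Finset.card_pos.mpr ⟨i, by simp [Fb, hi]⟩

lemma card_Fb_le (α : Fin n → ℕ) : (Fb m n α).card ≤ m.factorial := by
  classical
  rcases eq_or_ne (Fb m n α) ∅ with he | he
  · simp [he]
  · obtain ⟨i₀, hi₀⟩ := Finset.nonempty_iff_ne_empty.mpr he
    have hsub : Fb m n α ⊆ Finset.image (fun σ : Equiv.Perm (Fin m) => i₀ ∘ σ) univ := by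
      intro i hi
      simp only [Fb, mem_filter, mem_univ, true_and] at hi hi₀
      obtain ⟨σ, hσ⟩ := exists_perm_comp (hi.trans hi₀.symm)
      exact Finset.mem_image.mpr ⟨σ, mem_univ _, hσ⟩
    calc (Fb m n α).card ≤ _ := Finset.card_le_card hsub
      _ ≤ (univ : Finset (Equiv.Perm (Fin m))).card := Finset.card_image_le
      _ = m.factorial := by rw [Finset.card_univ, Fintype.card_perm, Fintype.card_fin]

lemma sum_cnt_fiber {M : Type*} [AddCommMonoid M] (f : (Fin n → ℕ) → M) :
    ∑ i : Fin m → Fin n, f (cnt i)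
      = ∑ α ∈ Finset.Nat.antidiagonalTuple n m, (Fb m n α).card • f α := by
  classical
  rw [← Finset.sum_fiberwise_of_maps_to (fun i _ => cnt_mem i) (fun i => f (cnt i))]
  refine Finset.sum_congr rfl fun α hα => ?_
  rw [Finset.sum_congr rfl (fun i hi => by rw [(Finset.mem_filter.mp hi).2]),
    Finset.sum_const]
  rfl

lemma prod_pow_cnt (z : Fin n → ℂ) (i : Fin m → Fin n) :
    ∏ k, z (i k) = ∏ j, z j ^ cnt i j := by
  classical
  rw [← Finset.prod_fiberwise_of_maps_to (fun k (_ : k ∈ univ) => mem_univ (i k))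
    (fun k => z (i k))]
  refine Finset.prod_congr rfl fun j _ => ?_
  rw [Finset.prod_congr rfl (fun k hk => by rw [(Finset.mem_filter.mp hk).2]),
    Finset.prod_const]
  rfl


def cnt' (r : Fin m → Fin m) : Fin m → ℕ := fun j => (univ.filter fun k => r k = j).card

noncomputable def Lmap (m n : ℕ) (c : (Fin m → Fin n) → ℂ) :
    ContinuousMultilinearMap ℂ (fun _ : Fin m => (Fin n → ℂ)) ℂ :=
  ∑ i : Fin m → Fin n, c i •
    (ContinuousMultilinearMap.mkPiAlgebra ℂ (Fin m) ℂ).compContinuousLinearMap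
      (fun k => ContinuousLinearMap.proj (i k))

lemma Lmap_apply (c : (Fin m → Fin n) → ℂ) (x : Fin m → Fin n → ℂ) :
    Lmap m n c x = ∑ i : Fin m → Fin n, c i * ∏ k, x k (i k) := by
  simp [Lmap, ContinuousMultilinearMap.sum_apply, smul_eq_mul]

lemma Lmap_single (c : (Fin m → Fin n) → ℂ) (i : Fin m → Fin n) :
    Lmap m n c (fun k => Pi.single (i k) (1 : ℂ)) = c i := by
  classical
  rw [Lmap_apply, Finset.sum_eq_single i]
  · simp [Pi.single_apply]
  · intro j _ hj
    obtain ⟨k, hk⟩ := Function.ne_iff.mp hj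
    refine mul_eq_zero_of_right _ (Finset.prod_eq_zero (Finset.mem_univ k) ?_)
    simp [Pi.single_apply, Ne.symm hk]
  · simp

end BHPolar

namespace BHPolar

variable {m n : ℕ}

lemma Lmap_perm (c : (Fin m → Fin n) → ℂ)
    (hc : ∀ (i : Fin m → Fin n) (σ : Equiv.Perm (Fin m)), c (i ∘ σ) = c i)
    (x : Fin m → Fin n → ℂ) (σ : Equiv.Perm (Fin m)) :
    Lmap m n c (fun k => x (σ k)) = Lmap m n c x := by
  classical
  rw [Lmap_apply, Lmap_apply]
  have step1 : ∀ i : Fin m → Fin n, ∏ k, x (σ k) (i k) = ∏ k, x k (i (σ.symm k)) := by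
    intro i
    refine Fintype.prod_equiv σ _ _ fun k => ?_
    simp
  simp_rw [step1]
  refine Fintype.sum_equiv (Equiv.arrowCongr σ (Equiv.refl (Fin n))) _ _ fun i => ?_
  have h1 : c ((Equiv.arrowCongr σ (Equiv.refl (Fin n))) i) = c i := by
    exact hc i σ.symm
  rw [h1]
  rfl

def sg : Bool → ℂ := fun b => if b then 1 else -1

lemma norm_sg (b : Bool) : ‖sg b‖ = 1 := by cases b <;> simp [sg]

lemma sum_sg_pow (d : ℕ) : ∑ b : Bool, sg b ^ d = 1 + (-1 : ℂ) ^ d := by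
  simp [sg, Fintype.sum_bool]

lemma cnt'_of_bij {r : Fin m → Fin m} (hr : Function.Bijective r) (k : Fin m) :
    cnt' r k = 1 := by
  classical
  have : (univ.filter fun s => r s = k) = {(Equiv.ofBijective r hr).symm k} := by
    ext s
    simp only [mem_filter, mem_univ, true_and, mem_singleton]
    exact (Equiv.ofBijective r hr).apply_eq_iff_eq_symm_apply
  rw [cnt', this, Finset.card_singleton]

lemma coeff_sum (r : Fin m → Fin m) :
    ∑ ε : Fin m → Bool, (∏ k, sg (ε k)) * (∏ s, sg (ε (r s)))
      = if Function.Bijective r then (2 : ℂ) ^ m else 0 := by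
  classical
  have hfib : ∀ ε : Fin m → Bool, (∏ s, sg (ε (r s))) = ∏ k, sg (ε k) ^ cnt' r k := by
    intro ε
    rw [← Finset.prod_fiberwise_of_maps_to' (fun s (_ : s ∈ univ) => mem_univ (r s))
      (fun k => sg (ε k))]
    exact Finset.prod_congr rfl fun k _ => by rw [Finset.prod_const]; rfl
  have hmerge : ∀ ε : Fin m → Bool,
      (∏ k, sg (ε k)) * (∏ s, sg (ε (r s))) = ∏ k, sg (ε k) ^ (1 + cnt' r k) := by
    intro ε
    rw [hfib, ← Finset.prod_mul_distrib]
    exact Finset.prod_congr rfl fun k _ => by rw [pow_add, pow_one]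
  simp_rw [hmerge]
  have hswap : ∑ ε : Fin m → Bool, ∏ k, sg (ε k) ^ (1 + cnt' r k)
      = ∏ k, ∑ b : Bool, sg b ^ (1 + cnt' r k) := by
    rw [Finset.prod_univ_sum (fun _ => (univ : Finset Bool))
      (fun k b => sg b ^ (1 + cnt' r k)), Fintype.piFinset_univ]
  rw [hswap]
  by_cases hr : Function.Bijective r
  · rw [if_pos hr]
    have h2 : ∀ k : Fin m, ∑ b : Bool, sg b ^ (1 + cnt' r k) = 2 := by
      intro k
      rw [cnt'_of_bij hr, sum_sg_pow]
      norm_num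
    simp_rw [h2]
    simp
  · rw [if_neg hr]
    obtain ⟨k, hk⟩ : ∃ k, ∀ s, r s ≠ k := by
      by_contra hcon
      push_neg at hcon
      exact hr (Finite.surjective_iff_bijective.mp fun k => hcon k)
    refine Finset.prod_eq_zero (Finset.mem_univ k) ?_
    have hc0 : cnt' r k = 0 := by
      rw [cnt', Finset.card_eq_zero]
      ext s; simp [hk s]
    rw [hc0, sum_sg_pow]
    norm_num

lemma polar (c : (Fin m → Fin n) → ℂ)
    (hc : ∀ (i : Fin m → Fin n) (σ : Equiv.Perm (Fin m)), c (i ∘ σ) = c i)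
    (x : Fin m → Fin n → ℂ) :
    ∑ ε : Fin m → Bool, (∏ k, sg (ε k)) * Lmap m n c (fun _ => ∑ k, sg (ε k) • x k)
      = ((2 : ℂ) ^ m * m.factorial) * Lmap m n c x := by
  classical
  have hexp : ∀ ε : Fin m → Bool,
      Lmap m n c (fun _ => ∑ k, sg (ε k) • x k)
        = ∑ r : Fin m → Fin m, (∏ s, sg (ε (r s))) * Lmap m n c (fun s => x (r s)) := by
    intro ε
    have hms := ContinuousMultilinearMap.map_sum (f := Lmap m n c)
      (g := fun (_ : Fin m) (k : Fin m) => sg (ε k) • x k)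
    rw [hms]
    refine Finset.sum_congr rfl fun r _ => ?_
    have := ContinuousMultilinearMap.map_smul_univ (Lmap m n c)
      (fun s => sg (ε (r s))) (fun s => x (r s))
    rw [this, smul_eq_mul]
  simp_rw [hexp, Finset.mul_sum]
  rw [Finset.sum_comm]
  have hterm : ∀ r : Fin m → Fin m,
      ∑ ε : Fin m → Bool, (∏ k, sg (ε k)) * ((∏ s, sg (ε (r s))) * Lmap m n c (fun s => x (r s)))
        = (if Function.Bijective r then (2 : ℂ) ^ m else 0) * Lmap m n c (fun s => x (r s)) := by
    intro r
    rw [← coeff_sum r, Finset.sum_mul]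
    exact Finset.sum_congr rfl fun ε _ => (mul_assoc _ _ _).symm
  simp_rw [hterm]
  have hsplit : ∀ r : Fin m → Fin m,
      (if Function.Bijective r then (2 : ℂ) ^ m else 0) * Lmap m n c (fun s => x (r s))
        = if Function.Bijective r then (2 : ℂ) ^ m * Lmap m n c (fun s => x (r s)) else 0 := by
    intro r; split <;> simp
  simp_rw [hsplit]
  rw [← Finset.sum_filter, ← Finset.mul_sum]
  have hperm : ∑ r ∈ univ.filter (fun r => Function.Bijective r),
      Lmap m n c (fun s => x (r s)) = ∑ σ : Equiv.Perm (Fin m), Lmap m n c (fun s => x (σ s)) :=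
    (Finset.sum_bij' (fun (σ : Equiv.Perm (Fin m)) (_ : σ ∈ univ) => (σ : Fin m → Fin m))
      (fun r hr => Equiv.ofBijective r (Finset.mem_filter.mp hr).2)
      (fun σ _ => Finset.mem_filter.mpr ⟨mem_univ _, σ.bijective⟩)
      (fun r hr => mem_univ _)
      (fun σ _ => by ext k; rfl)
      (fun r hr => rfl)
      (fun σ _ => rfl)).symm
  rw [hperm, Finset.sum_congr rfl (fun σ _ => Lmap_perm c hc x σ), Finset.sum_const,
    Finset.card_univ, Fintype.card_perm, Fintype.card_fin, nsmul_eq_mul]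
  ring

end BHPolar

namespace BHPolar
variable {m n : ℕ}

lemma norm_Lmap_le (hm : 0 < m) (c : (Fin m → Fin n) → ℂ)
    (hc : ∀ (i : Fin m → Fin n) (σ : Equiv.Perm (Fin m)), c (i ∘ σ) = c i)
    (S : ℝ) (hS : 0 ≤ S)
    (hP : ∀ z : Fin n → ℂ, (∀ j, ‖z j‖ ≤ 1) → ‖Lmap m n c (fun _ => z)‖ ≤ S) :
    ‖Lmap m n c‖ ≤ (m : ℝ) ^ m / m.factorial * S := by
  classical
  have hm0 : (0:ℝ) < m := by exact_mod_cast hm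
  have hfac : (0:ℝ) < m.factorial := by exact_mod_cast m.factorial_pos
  have hunit : ∀ x : Fin m → Fin n → ℂ, (∀ k, ‖x k‖ ≤ 1) →
      ‖Lmap m n c x‖ ≤ (m:ℝ)^m / m.factorial * S := by
    intro x hx
    have hdiag : ∀ ε : Fin m → Bool,
        ‖Lmap m n c (fun _ => ∑ k, sg (ε k) • x k)‖ ≤ (m:ℝ)^m * S := by
      intro ε
      set w : Fin n → ℂ := ∑ k, sg (ε k) • x k with hw
      set z : Fin n → ℂ := ((m:ℂ))⁻¹ • w with hz
      have hmC : (m:ℂ) ≠ 0 := Nat.cast_ne_zero.mpr hm.ne'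
      have hwz : w = (m:ℂ) • z := by
        rw [hz, smul_inv_smul₀ hmC]
      have hzj : ∀ j, ‖z j‖ ≤ 1 := by
        intro j
        have hwj : ‖w j‖ ≤ m := by
          calc ‖w j‖ = ‖∑ k, sg (ε k) * x k j‖ := by rw [hw]; simp [Finset.sum_apply]
          _ ≤ ∑ k, ‖sg (ε k) * x k j‖ := norm_sum_le _ _
          _ ≤ ∑ _k : Fin m, 1 := Finset.sum_le_sum fun k _ => by
              rw [norm_mul, norm_sg, one_mul]
              exact (norm_le_pi_norm (x k) j).trans (hx k)
          _ = m := by simp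
        have hzj2 : ‖z j‖ = (m:ℝ)⁻¹ * ‖w j‖ := by
          rw [hz]
          show ‖(m:ℂ)⁻¹ * w j‖ = _
          rw [norm_mul, norm_inv, Complex.norm_natCast]
        rw [hzj2]
        calc (m:ℝ)⁻¹ * ‖w j‖ ≤ (m:ℝ)⁻¹ * m :=
          mul_le_mul_of_nonneg_left hwj (by positivity)
        _ = 1 := inv_mul_cancel₀ hm0.ne'
      have hLw : Lmap m n c (fun _ => w) = ((m:ℂ)^m) • Lmap m n c (fun _ => z) := by
        conv_lhs => rw [hwz]
        have := ContinuousMultilinearMap.map_smul_univ (Lmap m n c)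
          (fun _ : Fin m => (m:ℂ)) (fun _ => z)
        simpa using this
      rw [hLw, norm_smul, norm_pow, Complex.norm_natCast]
      exact mul_le_mul_of_nonneg_left (hP z hzj) (by positivity)
    have h1 : ‖((2:ℂ)^m * (m.factorial:ℂ)) * Lmap m n c x‖
        ≤ ∑ _ε : Fin m → Bool, (m:ℝ)^m * S := by
      rw [← polar c hc x]
      refine (norm_sum_le _ _).trans (Finset.sum_le_sum fun ε _ => ?_)
      rw [norm_mul]
      have hεn : ‖∏ k, sg (ε k)‖ = 1 := by
        calc ‖∏ k, sg (ε k)‖ = ∏ k, ‖sg (ε k)‖ := norm_prod _ _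
        _ = ∏ _k : Fin m, (1:ℝ) := Finset.prod_congr rfl fun k _ => norm_sg (ε k)
        _ = 1 := Finset.prod_const_one
      rw [hεn, one_mul]
      exact hdiag ε
    have h2 : ‖((2:ℂ)^m * (m.factorial:ℂ))‖ = (2:ℝ)^m * m.factorial := by
      rw [norm_mul, norm_pow, Complex.norm_natCast]
      norm_num
    have h3 : ∑ _ε : Fin m → Bool, (m:ℝ)^m * S = (2:ℝ)^m * ((m:ℝ)^m * S) := by
      rw [Finset.sum_const, Finset.card_univ, nsmul_eq_mul]
      congr 1
      simp [Fintype.card_fun]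
    have key : ((2:ℝ)^m * m.factorial) * ‖Lmap m n c x‖ ≤ (2:ℝ)^m * ((m:ℝ)^m * S) := by
      rw [← h3, ← h2, ← norm_mul]
      exact h1
    have h2pos : (0:ℝ) < (2:ℝ)^m := by positivity
    rw [div_mul_eq_mul_div, le_div_iff₀ hfac]
    have key2 : (2:ℝ)^m * ((m.factorial:ℝ) * ‖Lmap m n c x‖) ≤ (2:ℝ)^m * ((m:ℝ)^m * S) := by
      calc (2:ℝ)^m * ((m.factorial:ℝ) * ‖Lmap m n c x‖)
          = ((2:ℝ)^m * m.factorial) * ‖Lmap m n c x‖ := by ring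
      _ ≤ _ := key
    have hfin := le_of_mul_le_mul_left key2 h2pos
    calc ‖Lmap m n c x‖ * (m.factorial:ℝ) = (m.factorial:ℝ) * ‖Lmap m n c x‖ := by ring
    _ ≤ (m:ℝ)^m * S := hfin
  refine ContinuousMultilinearMap.opNorm_le_bound (by positivity) fun x => ?_
  by_cases hx : ∀ k, x k ≠ 0
  · set u : Fin m → Fin n → ℂ := fun k => ((‖x k‖ : ℂ))⁻¹ • x k with hu
    have hxn0 : ∀ k, (‖x k‖ : ℂ) ≠ 0 :=
      fun k => Complex.ofReal_ne_zero.mpr (norm_ne_zero_iff.mpr (hx k))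
    have hxu : x = fun k => ((‖x k‖ : ℂ)) • u k := by
      funext k
      rw [hu]
      simp only
      rw [smul_inv_smul₀ (hxn0 k)]
    have hL : Lmap m n c x = (∏ k, (‖x k‖:ℂ)) • Lmap m n c u := by
      conv_lhs => rw [hxu]
      exact ContinuousMultilinearMap.map_smul_univ _ _ _
    have hnu : ∀ k, ‖u k‖ ≤ 1 := by
      intro k
      rw [hu]
      simp only
      rw [norm_smul, norm_inv, Complex.norm_real, Real.norm_eq_abs,
        abs_of_nonneg (norm_nonneg _), inv_mul_cancel₀ (norm_ne_zero_iff.mpr (hx k))]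
    rw [hL, norm_smul]
    have hnp : ‖∏ k, (‖x k‖:ℂ)‖ = ∏ k, ‖x k‖ := by
      rw [norm_prod]
      exact Finset.prod_congr rfl fun k _ => by
        rw [Complex.norm_real, Real.norm_eq_abs, abs_of_nonneg (norm_nonneg _)]
    rw [hnp, mul_comm]
    exact mul_le_mul_of_nonneg_right (hunit u hnu)
      (Finset.prod_nonneg fun k _ => norm_nonneg _)
  · push_neg at hx
    obtain ⟨k, hk⟩ := hx
    rw [ContinuousMultilinearMap.map_coord_zero (Lmap m n c) k hk, norm_zero]
    positivity

end BHPolar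


/-- **Polynomial Bohnenblust–Hille inequality via polarization.** Let `C ≥ 1` be a constant
for which the `m`-linear Bohnenblust–Hille inequality holds over `ℂ`. Then for every `n` and
every `m`-homogeneous polynomial `P(z) = Σ_{|α|=m} a_α z^α` on `ℂ^n`,
`(Σ_{|α|=m} |a_α|^{2m/(m+1)})^{(m+1)/(2m)} ≤ C m^m/(m!)^{(m+1)/(2m)} ‖P‖`,
where `‖P‖` is the supremum of `|P(z)|` over the closed unit polydisk. -/
theorem polynomial_bh_of_multilinear_bh (m : ℕ) (hm : 0 < m) (C : ℝ) (hC : 1 ≤ C)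
    (h : ∀ (n : ℕ) (L : ContinuousMultilinearMap ℂ (fun _ : Fin m => (Fin n → ℂ)) ℂ),
      (∑ i : Fin m → Fin n,
          ‖L (fun k => Pi.single (i k) 1)‖ ^ (2 * (m : ℝ) / ((m : ℝ) + 1))) ^
          (((m : ℝ) + 1) / (2 * (m : ℝ))) ≤ C * ‖L‖)
    (n : ℕ) (a : (Fin n → ℕ) → ℂ) :
    (∑ α ∈ Finset.Nat.antidiagonalTuple n m,
        ‖a α‖ ^ (2 * (m : ℝ) / ((m : ℝ) + 1))) ^ (((m : ℝ) + 1) / (2 * (m : ℝ))) ≤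
      C * (m : ℝ) ^ m / (Nat.factorial m : ℝ) ^ (((m : ℝ) + 1) / (2 * (m : ℝ))) *
        sSup {x : ℝ | ∃ z : Fin n → ℂ, (∀ k, ‖z k‖ ≤ 1) ∧
          x = ‖∑ α ∈ Finset.Nat.antidiagonalTuple n m,
                a α * ∏ j : Fin n, z j ^ α j‖} := by
  classical
  have hm0 : (0:ℝ) < m := by exact_mod_cast hm
  have hm1 : (1:ℝ) ≤ m := by exact_mod_cast hm
  set ρ : ℝ := 2 * (m:ℝ) / ((m:ℝ) + 1) with hρdef
  set q : ℝ := ((m:ℝ) + 1) / (2 * (m:ℝ)) with hqdef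
  have hq0 : 0 < q := by rw [hqdef]; positivity
  have hρ1 : 1 ≤ ρ := by
    rw [hρdef, le_div_iff₀ (by positivity)]
    linarith
  have hρq : ρ * q = 1 := by
    rw [hρdef, hqdef]
    field_simp
  set K : ℝ := (Nat.factorial m : ℝ) with hKdef
  have hK1 : (1:ℝ) ≤ K := by
    rw [hKdef]; exact_mod_cast Nat.one_le_iff_ne_zero.mpr m.factorial_pos.ne'
  have hK0 : (0:ℝ) < K := zero_lt_one.trans_le hK1
  set c : (Fin m → Fin n) → ℂ :=
    fun i => a (BHPolar.cnt i) / ((BHPolar.Fb m n (BHPolar.cnt i)).card : ℂ) with hcdef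
  have hcinv : ∀ (i : Fin m → Fin n) (σ : Equiv.Perm (Fin m)), c (i ∘ σ) = c i := by
    intro i σ
    simp only [hcdef]
    rw [BHPolar.cnt_comp]
  set Sset : Set ℝ := {x : ℝ | ∃ z : Fin n → ℂ, (∀ k, ‖z k‖ ≤ 1) ∧
      x = ‖∑ α ∈ Finset.Nat.antidiagonalTuple n m,
            a α * ∏ j : Fin n, z j ^ α j‖} with hSsetdef
  set S : ℝ := sSup Sset with hSdef
  have hbdd : BddAbove Sset := by
    refine ⟨∑ α ∈ Finset.Nat.antidiagonalTuple n m, ‖a α‖, ?_⟩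
    rintro x ⟨z, hz, rfl⟩
    refine (norm_sum_le _ _).trans (Finset.sum_le_sum fun α _ => ?_)
    rw [norm_mul]
    have h1 : ‖∏ j, z j ^ α j‖ ≤ 1 := by
      rw [norm_prod]
      refine Finset.prod_le_one (fun j _ => norm_nonneg _) (fun j _ => ?_)
      rw [norm_pow]
      exact pow_le_one₀ (norm_nonneg _) (hz j)
    calc ‖a α‖ * ‖∏ j, z j ^ α j‖ ≤ ‖a α‖ * 1 :=
      mul_le_mul_of_nonneg_left h1 (norm_nonneg _)
    _ = ‖a α‖ := mul_one _
  have hmem0 : ‖∑ α ∈ Finset.Nat.antidiagonalTuple n m,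
      a α * ∏ j : Fin n, (0 : Fin n → ℂ) j ^ α j‖ ∈ Sset :=
    ⟨0, fun k => by simp, rfl⟩
  have hS0 : 0 ≤ S := le_trans (norm_nonneg _) (le_csSup hbdd hmem0)
  have hNα : ∀ α ∈ Finset.Nat.antidiagonalTuple n m, 1 ≤ (BHPolar.Fb m n α).card :=
    fun α hα => BHPolar.one_le_card_Fb (Finset.Nat.mem_antidiagonalTuple.mp hα)
  have hdiag : ∀ z : Fin n → ℂ, BHPolar.Lmap m n c (fun _ => z)
      = ∑ α ∈ Finset.Nat.antidiagonalTuple n m, a α * ∏ j, z j ^ α j := by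
    intro z
    rw [BHPolar.Lmap_apply]
    have h1 : ∀ i : Fin m → Fin n, c i * ∏ k, z (i k)
        = (fun α => a α / ((BHPolar.Fb m n α).card : ℂ) * ∏ j, z j ^ α j)
            (BHPolar.cnt i) := by
      intro i
      simp only [hcdef, BHPolar.prod_pow_cnt]
    rw [Finset.sum_congr rfl fun i _ => h1 i,
      BHPolar.sum_cnt_fiber (fun α => a α / ((BHPolar.Fb m n α).card : ℂ) * ∏ j, z j ^ α j)]
    refine Finset.sum_congr rfl fun α hα => ?_
    have hN0 : ((BHPolar.Fb m n α).card : ℂ) ≠ 0 := Nat.cast_ne_zero.mpr (by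
      have := hNα α hα; omega)
    rw [nsmul_eq_mul]
    field_simp
  have hP : ∀ z : Fin n → ℂ, (∀ j, ‖z j‖ ≤ 1) → ‖BHPolar.Lmap m n c (fun _ => z)‖ ≤ S := by
    intro z hz
    rw [hdiag z]
    exact le_csSup hbdd ⟨z, hz, rfl⟩
  have hnorm : ‖BHPolar.Lmap m n c‖ ≤ (m:ℝ)^m / K * S := by
    rw [hKdef]
    exact BHPolar.norm_Lmap_le hm c hcinv S hS0 hP
  have hBH := h n (BHPolar.Lmap m n c)
  simp only [BHPolar.Lmap_single] at hBH
  have hcoef : ∑ α ∈ Finset.Nat.antidiagonalTuple n m, ‖a α‖ ^ ρ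
      ≤ K ^ (ρ - 1) * ∑ i : Fin m → Fin n, ‖c i‖ ^ ρ := by
    have hfib : ∑ i : Fin m → Fin n, ‖c i‖ ^ ρ
        = ∑ α ∈ Finset.Nat.antidiagonalTuple n m,
            (BHPolar.Fb m n α).card • (‖a α / ((BHPolar.Fb m n α).card : ℂ)‖ ^ ρ) := by
      simp only [hcdef]
      exact BHPolar.sum_cnt_fiber
        (fun α => ‖a α / (((BHPolar.Fb m n α).card) : ℂ)‖ ^ ρ)
    rw [hfib, Finset.mul_sum]
    refine Finset.sum_le_sum fun α hα => ?_
    have hN1 : (1:ℝ) ≤ ((BHPolar.Fb m n α).card : ℝ) := by exact_mod_cast hNα α hα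
    have hN0 : (0:ℝ) < ((BHPolar.Fb m n α).card : ℝ) := zero_lt_one.trans_le hN1
    have hNK : ((BHPolar.Fb m n α).card : ℝ) ≤ K := by
      rw [hKdef]; exact_mod_cast BHPolar.card_Fb_le α
    have hnd : ‖a α / ((BHPolar.Fb m n α).card : ℂ)‖
        = ‖a α‖ / ((BHPolar.Fb m n α).card : ℝ) := by
      rw [norm_div, Complex.norm_natCast]
    rw [hnd, nsmul_eq_mul, Real.div_rpow (norm_nonneg _) hN0.le]
    set Nr : ℝ := ((BHPolar.Fb m n α).card : ℝ) with hNrdef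
    have hfactor : (1:ℝ) ≤ K ^ (ρ-1) * (Nr / Nr ^ ρ) := by
      have e1 : Nr / Nr ^ ρ = Nr ^ ((1:ℝ) - ρ) := by
        rw [Real.rpow_sub hN0, Real.rpow_one]
      have e2 : K ^ (ρ-1) * Nr ^ ((1:ℝ) - ρ) = (K / Nr) ^ (ρ-1) := by
        rw [show (1:ℝ) - ρ = -(ρ-1) by ring, Real.rpow_neg hN0.le,
          ← div_eq_mul_inv, ← Real.div_rpow hK0.le hN0.le]
      rw [e1, e2]
      calc (1:ℝ) = 1 ^ (ρ-1) := (Real.one_rpow _).symm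
      _ ≤ (K / Nr) ^ (ρ-1) :=
        Real.rpow_le_rpow zero_le_one ((one_le_div hN0).mpr hNK) (by linarith)
    have hta : (0:ℝ) ≤ ‖a α‖ ^ ρ := Real.rpow_nonneg (norm_nonneg _) _
    calc ‖a α‖ ^ ρ = 1 * ‖a α‖ ^ ρ := (one_mul _).symm
    _ ≤ (K ^ (ρ-1) * (Nr / Nr ^ ρ)) * ‖a α‖ ^ ρ :=
        mul_le_mul_of_nonneg_right hfactor hta
    _ = K ^ (ρ-1) * (Nr * (‖a α‖ ^ ρ / Nr ^ ρ)) := by ring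
  have hA0 : (0:ℝ) ≤ ∑ α ∈ Finset.Nat.antidiagonalTuple n m, ‖a α‖ ^ ρ :=
    Finset.sum_nonneg fun α _ => Real.rpow_nonneg (norm_nonneg _) _
  have hB0 : (0:ℝ) ≤ ∑ i : Fin m → Fin n, ‖c i‖ ^ ρ :=
    Finset.sum_nonneg fun i _ => Real.rpow_nonneg (norm_nonneg _) _
  have hKρ0 : (0:ℝ) ≤ K ^ (ρ-1) := Real.rpow_nonneg hK0.le _
  have hKρq0 : (0:ℝ) ≤ (K ^ (ρ-1)) ^ q := Real.rpow_nonneg hKρ0 _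
  calc (∑ α ∈ Finset.Nat.antidiagonalTuple n m, ‖a α‖ ^ ρ) ^ q
      ≤ (K ^ (ρ-1) * ∑ i : Fin m → Fin n, ‖c i‖ ^ ρ) ^ q :=
        Real.rpow_le_rpow hA0 hcoef hq0.le
    _ = (K ^ (ρ-1)) ^ q * (∑ i : Fin m → Fin n, ‖c i‖ ^ ρ) ^ q :=
        Real.mul_rpow hKρ0 hB0
    _ ≤ (K ^ (ρ-1)) ^ q * (C * ‖BHPolar.Lmap m n c‖) :=
        mul_le_mul_of_nonneg_left hBH hKρq0
    _ ≤ (K ^ (ρ-1)) ^ q * (C * ((m:ℝ)^m / K * S)) := by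
        refine mul_le_mul_of_nonneg_left ?_ hKρq0
        exact mul_le_mul_of_nonneg_left hnorm (by linarith)
    _ = C * (m:ℝ)^m / K ^ q * S := by
        have e1 : (K ^ (ρ-1)) ^ q = K / K ^ q := by
          rw [← Real.rpow_mul hK0.le, show (ρ-1)*q = 1 - q by
              rw [sub_mul, hρq, one_mul],
            Real.rpow_sub hK0, Real.rpow_one]
        rw [e1]
        have hKq : (0:ℝ) < K ^ q := Real.rpow_pos_of_pos hK0 q
        field_simp
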